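/- Let $\theta>1$ and let $a_0:\mathbb{R}\to\mathbb{R}$ be bounded and continuous with $e^{\int_0^t a_0}\in L^1((-\infty,0])$. Then the scalar ODE $w'=\frac{1}{\theta-1}a_0(t)\,w-\frac{1}{\theta-1}w^{\theta}$ has an entire solution $w_0:\mathbb{R}\to(0,\infty)$ that is bounded; explicitly, $w_0(t)=\big(\int_{-\infty}^t e^{-\int_s^t a_0}\,ds\big)^{\frac{1}{1-\theta}}$. -/

import Mathlib

open MeasureTheory Set Filter

theorem stmt1 (θ : ℝ) (hθ : 1 < θ) (a0 : ℝ → ℝ) (hcont : Continuous a0)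
    (hbdd : ∃ M, ∀ t, |a0 t| ≤ M)
    (hint : IntegrableOn (fun t => Real.exp (∫ s in (0:ℝ)..t, a0 s)) (Iic 0)) :
    ∃ w0 : ℝ → ℝ,
      (∀ t, w0 t = (∫ s in Iic t, Real.exp (-∫ r in s..t, a0 r)) ^ (1 / (1 - θ))) ∧
      (∀ t, 0 < w0 t) ∧ (∃ M, ∀ t, w0 t ≤ M) ∧
      (∀ t, HasDerivAt w0 (1 / (θ - 1) * a0 t * w0 t - 1 / (θ - 1) * w0 t ^ θ) t) := by
  obtain ⟨M, hM⟩ := hbdd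
  have hM0 : 0 ≤ M := (abs_nonneg _).trans (hM 0)
  set A : ℝ → ℝ := fun t => ∫ s in (0:ℝ)..t, a0 s with hAdef
  have hAderiv : ∀ t, HasDerivAt A (a0 t) t := fun t =>
    (hcont.integral_hasStrictDerivAt 0 t).hasDerivAt
  have hAcont : Continuous A :=
    continuous_iff_continuousAt.2 fun t => (hAderiv t).continuousAt
  have hexpA : Continuous fun s => Real.exp (A s) := Real.continuous_exp.comp hAcont
  have hexpint : ∀ t, IntegrableOn (fun s => Real.exp (A s)) (Iic t) := by
    intro t
    rcases le_or_gt t 0 with h | h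
    · exact hint.mono_set (Iic_subset_Iic.2 h)
    · have hsub : Iic t ⊆ Iic 0 ∪ Icc 0 t := by
        intro x hx
        rcases le_or_gt x 0 with h' | h'
        · exact Or.inl h'
        · exact Or.inr ⟨h'.le, hx⟩
      exact (hint.union (hexpA.integrableOn_Icc)).mono_set hsub
  -- pointwise identity
  have hpt : ∀ t s : ℝ, Real.exp (-∫ r in s..t, a0 r)
      = Real.exp (-A t) * Real.exp (A s) := by
    intro t s
    rw [← Real.exp_add]
    congr 1
    have h := intervalIntegral.integral_add_adjacent_intervals (μ := volume)
      (hcont.intervalIntegrable 0 s) (hcont.intervalIntegrable s t)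
    simp only [hAdef]
    linarith
  set J : ℝ → ℝ := fun t => ∫ s in Iic t, Real.exp (A s) with hJdef
  have hJ : ∀ t, J t = J 0 + ∫ s in (0:ℝ)..t, Real.exp (A s) := by
    intro t
    have h := intervalIntegral.integral_Iic_sub_Iic (f := fun s => Real.exp (A s))
      (hexpint 0) (hexpint t)
    simp only [hJdef]
    linarith
  have hJderiv : ∀ t, HasDerivAt J (Real.exp (A t)) t := by
    intro t
    have h1 : HasDerivAt (fun u => J 0 + ∫ s in (0:ℝ)..u, Real.exp (A s))
        (Real.exp (A t)) t :=
      ((hexpA.integral_hasStrictDerivAt 0 t).hasDerivAt).const_add _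
    have heq : J = fun u => J 0 + ∫ s in (0:ℝ)..u, Real.exp (A s) := funext hJ
    rw [heq]
    exact h1
  set I : ℝ → ℝ := fun t => ∫ s in Iic t, Real.exp (-∫ r in s..t, a0 r) with hIdef
  have hI : ∀ t, I t = Real.exp (-A t) * J t := by
    intro t
    simp only [hIdef, hJdef]
    rw [← integral_const_mul]
    exact integral_congr_ae (ae_of_all _ fun s => hpt t s)
  have hIderiv : ∀ t, HasDerivAt I (1 - a0 t * I t) t := by
    intro t
    have hexp : HasDerivAt (fun u => Real.exp (-A u)) (-a0 t * Real.exp (-A t)) t := by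
      have h := ((hAderiv t).neg).exp
      simpa [mul_comm] using h
    have h1 : HasDerivAt (fun u => Real.exp (-A u) * J u)
        ((-a0 t * Real.exp (-A t)) * J t + Real.exp (-A t) * Real.exp (A t)) t :=
      hexp.mul (hJderiv t)
    have heq : I = fun u => Real.exp (-A u) * J u := funext hI
    rw [heq]
    convert h1 using 1
    have hee : Real.exp (-A t) * Real.exp (A t) = 1 := by
      rw [← Real.exp_add, neg_add_cancel, Real.exp_zero]
    simp only
    rw [hee]
    ring
  have hIint : ∀ t, IntegrableOn (fun s => Real.exp (-∫ r in s..t, a0 r)) (Iic t) := by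
    intro t
    have heq : (fun s => Real.exp (-∫ r in s..t, a0 r))
        = fun s => Real.exp (-A t) * Real.exp (A s) := funext fun s => hpt t s
    rw [heq]
    exact (hexpint t).const_mul _
  have hIlb : ∀ t, Real.exp (-M) ≤ I t := by
    intro t
    have hsub : Ioc (t - 1) t ⊆ Iic t := Ioc_subset_Iic_self
    have h1 : (∫ s in Ioc (t - 1) t, Real.exp (-∫ r in s..t, a0 r)) ≤ I t := by
      apply setIntegral_mono_set (hIint t)
        (ae_of_all _ fun s => (Real.exp_pos _).le)
      exact HasSubset.Subset.eventuallyLE hsub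
    have h2 : Real.exp (-M) * (volume (Ioc (t - 1) t)).toReal
        ≤ ∫ s in Ioc (t - 1) t, Real.exp (-∫ r in s..t, a0 r) := by
      apply setIntegral_ge_of_const_le_real measurableSet_Ioc
        (by simp : volume (Ioc (t - 1) t) ≠ ⊤)
        ?_ ((hIint t).mono_set hsub)
      intro s hs
      have hbound : |∫ r in s..t, a0 r| ≤ M * |t - s| := by
        have := intervalIntegral.norm_integral_le_of_norm_le_const
          (a := s) (b := t) (C := M) (f := a0) (fun x _ => by
            rw [Real.norm_eq_abs]; exact hM x)
        simpa [Real.norm_eq_abs] using this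
      have hts : |t - s| ≤ 1 := by
        rw [abs_of_nonneg (by linarith [hs.2] : (0:ℝ) ≤ t - s)]
        linarith [hs.1]
      have : |∫ r in s..t, a0 r| ≤ M := by
        calc |∫ r in s..t, a0 r| ≤ M * |t - s| := hbound
          _ ≤ M * 1 := by exact mul_le_mul_of_nonneg_left hts hM0
          _ = M := mul_one M
      have := abs_le.1 this
      exact Real.exp_le_exp.2 (by linarith)
    have hvol : (volume (Ioc (t - 1) t)).toReal = 1 := by
      rw [Real.volume_Ioc]
      norm_num
    rw [hvol, mul_one] at h2
    linarith
  have hIpos : ∀ t, 0 < I t := fun t => lt_of_lt_of_le (Real.exp_pos _) (hIlb t)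
  set p : ℝ := 1 / (1 - θ) with hpdef
  have hθ1 : (1:ℝ) - θ < 0 := by linarith
  have hpneg : p < 0 := div_neg_of_pos_of_neg one_pos hθ1
  have hne : (1:ℝ) - θ ≠ 0 := ne_of_lt hθ1
  have hne' : θ - 1 ≠ 0 := by intro h; apply hne; linarith
  refine ⟨fun t => I t ^ p, fun t => rfl, fun t => Real.rpow_pos_of_pos (hIpos t) p,
    ⟨Real.exp (-M) ^ p, fun t =>
      Real.rpow_le_rpow_of_nonpos (Real.exp_pos _) (hIlb t) hpneg.le⟩, ?_⟩
  intro t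
  have hd : HasDerivAt (fun u => I u ^ p) ((1 - a0 t * I t) * p * I t ^ (p - 1)) t :=
    (hIderiv t).rpow_const (Or.inl (hIpos t).ne')
  convert hd using 1
  simp only
  have h1 : (I t ^ p) ^ θ = I t ^ (p - 1) := by
    rw [← Real.rpow_mul (hIpos t).le]
    congr 1
    rw [hpdef]
    field_simp
    ring
  have hY : I t ^ p = I t * I t ^ (p - 1) := by
    nth_rewrite 1 [show p = 1 + (p - 1) by ring]
    rw [Real.rpow_add (hIpos t), Real.rpow_one]
  rw [h1, hY, hpdef]
  field_simp
  ring
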